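/- There exists an infinite family $\mathcal{F}$ of right-angled triangles (2-dimensional closed triangular regions) in $\mathbb{R}^2$, each with positive area and uniformly bounded diameter, such that any two members intersect, yet no finite set of points pierces all members of $\mathcal{F}$. -/

import Mathlib

/-- A right-angled (closed, solid) triangle in the Euclidean plane. -/
def IsRightTriangle (F : Set (EuclideanSpace ℝ (Fin 2))) : Prop :=
  ∃ p q r : EuclideanSpace ℝ (Fin 2),
    ¬ Collinear ℝ ({p, q, r} : Set (EuclideanSpace ℝ (Fin 2))) ∧
    (inner ℝ (q - p) (r - p) : ℝ) = 0 ∧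
    F = convexHull ℝ ({p, q, r} : Set (EuclideanSpace ℝ (Fin 2)))

open Metric Set

noncomputable section

abbrev E2 := EuclideanSpace ℝ (Fin 2)

def pt (x y : ℝ) : E2 := (WithLp.equiv 2 (Fin 2 → ℝ)).symm ![x, y]

@[simp] lemma pt_zero (x y : ℝ) : pt x y 0 = x := rfl
@[simp] lemma pt_one (x y : ℝ) : pt x y 1 = y := rfl

def Pv (e : ℝ) : E2 := pt 0 (e + e^2)
def Qv (e : ℝ) : E2 := pt 1 (-e)
def Rv (e : ℝ) : E2 := pt (e^5 * (2*e + e^2)) (e + e^2 + e^5)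
def Tri (e : ℝ) : Set E2 := convexHull ℝ {Pv e, Qv e, Rv e}

def lin (c : ℝ) (z : E2) : ℝ := z 1 + c * z 0

lemma lin_isLinear (c : ℝ) : IsLinearMap ℝ (lin c) := by
  constructor
  · intro a b; simp [lin, PiLp.add_apply]; ring
  · intro t a; simp [lin, PiLp.smul_apply]; ring

lemma tri_subset_strip (e : ℝ) (he : 0 < e) (he1 : e ≤ 1) :
    Tri e ⊆ {z : E2 | e + e^2 ≤ lin (2*e+e^2) z ∧ lin (2*e+e^2) z ≤ e + e^2 + 10 * e^5} := by
  apply convexHull_min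
  · intro z hz
    have hp2 : e^2 ≤ 1 := pow_le_one₀ he.le he1
    have hp5 : e^5 ≤ 1 := pow_le_one₀ he.le he1
    simp only [Set.mem_insert_iff, Set.mem_singleton_iff] at hz
    rcases hz with rfl|rfl|rfl <;> constructor <;>
      simp [lin, Pv, Qv, Rv, Set.mem_setOf_eq] <;>
      nlinarith [pow_pos he 5, pow_pos he 2, sq_nonneg (2*e + e^2),
        mul_nonneg (mul_nonneg (pow_pos he 5).le (by nlinarith : (0:ℝ) ≤ 3 - (2*e+e^2)))
          (by positivity : (0:ℝ) ≤ 3 + (2*e+e^2)),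
        mul_nonneg (sq_nonneg (2*e + e^2)) (pow_pos he 5).le]
  · exact ((convex_halfSpace_ge (lin_isLinear _) _).inter (convex_halfSpace_le (lin_isLinear _) _))

lemma inter_mem (e f : ℝ) (he : 0 < e) (hf : 0 < f) :
    pt ((1+e+f)/(2+e+f)) (-(e*f)/(2+e+f)) ∈ Tri e := by
  have h2 : (0:ℝ) < 2 + e + f := by linarith
  set t : ℝ := (1+e+f)/(2+e+f) with ht
  have hkey : pt ((1+e+f)/(2+e+f)) (-(e*f)/(2+e+f)) = (1 - t) • Pv e + t • Qv e := by
    ext i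
    fin_cases i <;>
      simp [Pv, Qv, PiLp.add_apply, PiLp.smul_apply, ht] <;>
      field_simp <;> ring
  rw [hkey]
  have ht0 : 0 ≤ t := by positivity
  have ht1 : t ≤ 1 := by rw [ht, div_le_one h2]; linarith
  exact segment_subset_convexHull (Set.mem_insert _ _) (by simp)
    ⟨1 - t, t, by linarith, ht0, by ring, rfl⟩

lemma norm_pt_le (x y : ℝ) (hx : |x| ≤ 3) (hy : |y| ≤ 3) : ‖pt x y‖ ≤ 6 := by
  rw [EuclideanSpace.norm_eq]
  have : Real.sqrt (∑ i : Fin 2, ‖pt x y i‖^2) ≤ Real.sqrt 36 := by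
    apply Real.sqrt_le_sqrt
    simp [Fin.sum_univ_two]
    nlinarith [abs_nonneg x, abs_nonneg y, sq_abs x, sq_abs y]
  calc Real.sqrt (∑ i : Fin 2, ‖pt x y i‖^2) ≤ Real.sqrt 36 := this
    _ = 6 := by rw [show (36:ℝ) = 6^2 by norm_num, Real.sqrt_sq (by norm_num : (0:ℝ) ≤ 6)]

lemma tri_diam (e : ℝ) (he : 0 < e) (he1 : e ≤ 1) : Metric.diam (Tri e) ≤ 12 := by
  have hp2 : e^2 ≤ 1 := pow_le_one₀ he.le he1
  have hp5 : e^5 ≤ 1 := pow_le_one₀ he.le he1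
  have hsub : Tri e ⊆ Metric.closedBall (0 : E2) 6 := by
    apply convexHull_min _ (convex_closedBall _ _)
    intro z hz
    simp only [Set.mem_insert_iff, Set.mem_singleton_iff] at hz
    have hz6 : ‖z‖ ≤ 6 := by
      rcases hz with rfl|rfl|rfl <;>
        apply norm_pt_le <;> rw [abs_le] <;> constructor <;> nlinarith [pow_pos he 5, pow_pos he 2]
    simpa [Metric.mem_closedBall, dist_zero_right] using hz6
  apply Metric.diam_le_of_forall_dist_le (by norm_num : (0:ℝ) ≤ 12)
  intro a ha b hb
  have ha6 := hsub ha
  have hb6 := hsub hb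
  simp only [Metric.mem_closedBall, dist_zero_right] at ha6 hb6
  calc dist a b ≤ ‖a‖ + ‖b‖ := by
        simpa using dist_le_norm_add_norm a b
    _ ≤ 12 := by linarith

lemma not_mem_small (x y : ℝ) : ∃ δ > (0:ℝ), ∀ e : ℝ, 0 < e → e ≤ 1 → e < δ →
    ¬(e + e^2 ≤ lin (2*e+e^2) (pt x y) ∧ lin (2*e+e^2) (pt x y) ≤ e + e^2 + 10 * e^5) := by
  have hlin : ∀ e : ℝ, lin (2*e+e^2) (pt x y) = y + (2*e+e^2) * x := by
    intro e; simp [lin]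
  rcases lt_trichotomy y 0 with hy | hy | hy
  · refine ⟨(-y)/(3*|x|+22), div_pos (by linarith) (by positivity), ?_⟩
    intro e he0 he1 heδ hmem
    rw [hlin] at hmem
    have h1 : e * (3*|x|+22) < -y :=
      (lt_div_iff₀ (show (0:ℝ) < 3*|x|+22 by positivity)).mp heδ
    have hx1 : x ≤ |x| := le_abs_self x
    have hx2 : -x ≤ |x| := neg_le_abs x
    have he2 : e^2 ≤ e := by nlinarith
    nlinarith [hmem.1, mul_nonneg he0.le (abs_nonneg x)]
  · -- y = 0
    rcases le_or_gt x (1/2) with hx | hx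
    · refine ⟨1, by norm_num, ?_⟩
      intro e he0 he1 heδ hmem
      rw [hlin, hy] at hmem
      nlinarith [hmem.1, pow_pos he0 2]
    · refine ⟨(2*x-1)/(|x-1|+22), div_pos (by linarith) (by positivity), ?_⟩
      intro e he0 he1 heδ hmem
      rw [hlin, hy] at hmem
      have h1 : e * (|x-1|+22) < 2*x-1 :=
        (lt_div_iff₀ (show (0:ℝ) < |x-1|+22 by positivity)).mp heδ
      have hx1 : x - 1 ≤ |x-1| := le_abs_self _
      have hx2 : -(x-1) ≤ |x-1| := neg_le_abs _
      have he2 : e^2 ≤ e := by nlinarith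
      have he5 : e^5 ≤ e^2 := by nlinarith [pow_pos he0 2, pow_pos he0 3]
      nlinarith [hmem.2, mul_pos he0 he0, abs_nonneg (x-1),
        mul_nonneg he0.le (abs_nonneg (x-1)), mul_pos he0 (mul_pos he0 he0)]
  · refine ⟨y/(3*|x|+22), div_pos hy (by positivity), ?_⟩
    intro e he0 he1 heδ hmem
    rw [hlin] at hmem
    have h1 : e * (3*|x|+22) < y :=
      (lt_div_iff₀ (show (0:ℝ) < 3*|x|+22 by positivity)).mp heδ
    have hx1 : x ≤ |x| := le_abs_self x
    have hx2 : -x ≤ |x| := neg_le_abs x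
    have he2 : e^2 ≤ e := by nlinarith
    have he5 : e^5 ≤ e := by nlinarith [pow_pos he0 2, pow_pos he0 3]
    nlinarith [hmem.2, mul_nonneg he0.le (abs_nonneg x)]

lemma e_pos (n : ℕ) : (0:ℝ) < 1/((n:ℝ)+1) := by positivity

lemma e_le_one (n : ℕ) : 1/((n:ℝ)+1) ≤ 1 := by
  rw [div_le_one (by positivity)]
  have : (0:ℝ) ≤ n := n.cast_nonneg
  linarith

lemma finite_mem (z : E2) : {n : ℕ | z ∈ Tri (1/((n:ℝ)+1))}.Finite := by
  obtain ⟨δ, hδ, hδ2⟩ := not_mem_small (z 0) (z 1)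
  obtain ⟨N, hN⟩ := exists_nat_gt (1/δ)
  apply Set.Finite.subset (Set.finite_Iio N)
  intro n hn
  simp only [Set.mem_setOf_eq] at hn
  by_contra hge
  rw [Set.mem_Iio] at hge
  simp only [Set.mem_Iio, not_lt] at hge ⊢
  have hNn : (N:ℝ) ≤ (n:ℝ) := by exact_mod_cast hge
  have heδ : 1/((n:ℝ)+1) < δ := by
    have h1 : 1/δ < (n:ℝ)+1 := by linarith
    rw [div_lt_iff₀ (by positivity)]
    rw [div_lt_iff₀ hδ] at h1
    linarith
  have hz : pt (z 0) (z 1) = z := by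
    ext i; fin_cases i <;> rfl
  have := tri_subset_strip _ (e_pos n) (e_le_one n) hn
  rw [← hz] at this
  exact hδ2 _ (e_pos n) (e_le_one n) heδ this

def Fam : Set (Set E2) := Set.range (fun n : ℕ => Tri (1/((n:ℝ)+1)))

lemma no_pierce : ¬ ∃ P : Set E2, P.Finite ∧ ∀ F ∈ Fam, ∃ p ∈ P, p ∈ F := by
  rintro ⟨P, hPfin, hP⟩
  have huniv : (Set.univ : Set ℕ) ⊆ ⋃ p ∈ P, {n : ℕ | p ∈ Tri (1/((n:ℝ)+1))} := by
    intro n _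
    obtain ⟨p, hpP, hpT⟩ := hP (Tri (1/((n:ℝ)+1))) ⟨n, rfl⟩
    exact Set.mem_biUnion hpP hpT
  exact Set.infinite_univ
    (Set.Finite.subset (hPfin.biUnion fun p _ => finite_mem p) huniv)

lemma fam_nonempty (F : Set E2) (hF : F ∈ Fam) : F.Nonempty := by
  obtain ⟨n, rfl⟩ := hF
  exact ⟨Pv _, subset_convexHull ℝ _ (Set.mem_insert _ _)⟩

lemma fam_infinite : Fam.Infinite := by
  intro hfin
  apply no_pierce
  classical
  refine ⟨(fun F : Set E2 => if h : F.Nonempty then h.some else 0) '' Fam, hfin.image _, ?_⟩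
  intro F hF
  have hne := fam_nonempty F hF
  refine ⟨_, Set.mem_image_of_mem _ hF, ?_⟩
  simp only [dif_pos hne]
  exact hne.some_mem

lemma tri_right (e : ℝ) (he : 0 < e) : IsRightTriangle (Tri e) := by
  refine ⟨Pv e, Qv e, Rv e, ?_, ?_, rfl⟩
  · intro hcol
    rw [collinear_iff_of_mem (Set.mem_insert (Pv e) _)] at hcol
    obtain ⟨v, hv⟩ := hcol
    obtain ⟨tq, hq⟩ := hv (Qv e) (by simp)
    obtain ⟨tr, hr⟩ := hv (Rv e) (by simp)
    have hq0 : tq * v 0 = 1 := by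
      have := congrArg (fun z : E2 => z 0) hq
      simpa [Pv, Qv, PiLp.add_apply, PiLp.smul_apply] using this.symm
    have hq1 : tq * v 1 + (e + e^2) = -e := by
      have := congrArg (fun z : E2 => z 1) hq
      simpa [Pv, Qv, PiLp.add_apply, PiLp.smul_apply] using this.symm
    have hr0 : tr * v 0 = e^5 * (2*e + e^2) := by
      have := congrArg (fun z : E2 => z 0) hr
      simpa [Pv, Rv, PiLp.add_apply, PiLp.smul_apply] using this.symm
    have hr1 : tr * v 1 + (e + e^2) = e + e^2 + e^5 := by
      have := congrArg (fun z : E2 => z 1) hr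
      simpa [Pv, Rv, PiLp.add_apply, PiLp.smul_apply] using this.symm
    have key : (tq * v 1) * (tr * v 0) = (tq * v 0) * (tr * v 1) := by ring
    rw [hq0, hr0] at key
    have hq1' : tq * v 1 = -(2*e + e^2) := by linarith
    have hr1' : tr * v 1 = e^5 := by linarith
    rw [hq1', hr1'] at key
    nlinarith [pow_pos he 5, sq_nonneg (2*e + e^2)]
  · simp [PiLp.inner_apply, PiLp.sub_apply, Fin.sum_univ_two, Pv, Qv, Rv]
    ring

theorem stmt11 :
    ∃ 𝓕 : Set (Set (EuclideanSpace ℝ (Fin 2))),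
      𝓕.Infinite ∧
      (∀ F ∈ 𝓕, IsRightTriangle F) ∧
      (∃ D : ℝ, ∀ F ∈ 𝓕, Metric.diam F ≤ D) ∧
      (∀ F ∈ 𝓕, ∀ G ∈ 𝓕, (F ∩ G).Nonempty) ∧
      ¬ ∃ P : Set (EuclideanSpace ℝ (Fin 2)), P.Finite ∧ ∀ F ∈ 𝓕, ∃ p ∈ P, p ∈ F := by
  refine ⟨Fam, fam_infinite, ?_, ⟨12, ?_⟩, ?_, no_pierce⟩
  · rintro F ⟨n, rfl⟩
    exact tri_right _ (e_pos n)
  · rintro F ⟨n, rfl⟩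
    exact tri_diam _ (e_pos n) (e_le_one n)
  · rintro F ⟨n, rfl⟩ G ⟨m, rfl⟩
    set e : ℝ := 1/((n:ℝ)+1)
    set f : ℝ := 1/((m:ℝ)+1)
    refine ⟨pt ((1+e+f)/(2+e+f)) (-(e*f)/(2+e+f)), inter_mem e f (e_pos n) (e_pos m), ?_⟩
    have : pt ((1+e+f)/(2+e+f)) (-(e*f)/(2+e+f)) = pt ((1+f+e)/(2+f+e)) (-(f*e)/(2+f+e)) := by
      rw [show (1+e+f) = (1+f+e) by ring, show (2+e+f) = (2+f+e) by ring,
        show e*f = f*e by ring]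
    rw [this]
    exact inter_mem f e (e_pos m) (e_pos n)
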